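/- Let P ⊆ 2^ω be a closed set and l : ℕ → ℕ strictly increasing such that ∑_i 2^{l(i) − l(i+1)} < μ(P). Then there exists a nonempty closed set Q ⊆ P with the l-branching property: for every i, every string σ of length l(i) with [σ] ∩ Q ≠ ∅ has at least two extensions τ of length l(i+1) with [τ] ∩ Q ≠ ∅. -/

import Mathlib

open scoped ENNReal

/-- The length-`n` prefix of a point of Cantor space `2^ω = ℕ → Bool`, as a binary string. -/
def pre (x : ℕ → Bool) (n : ℕ) : List Bool := (List.range n).map x

/-- `σ` is a (finite) prefix of `x ∈ 2^ω`. -/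
def PrefOf (σ : List Bool) (x : ℕ → Bool) : Prop := pre x σ.length = σ

/-- The cylinder `[σ] = {x ∈ 2^ω : σ ⪯ x}`. -/
def cyl (σ : List Bool) : Set (ℕ → Bool) := {x | PrefOf σ x}

/-- `[V] = ⋃_{σ ∈ V} [σ]`. -/
def cylSet (V : Set (List Bool)) : Set (ℕ → Bool) := ⋃ σ ∈ V, cyl σ

/-- A tree: a set of binary strings closed under prefixes. -/
def IsTree (T : Set (List Bool)) : Prop := ∀ σ ∈ T, ∀ τ : List Bool, τ <+: σ → τ ∈ T

/-- A pruned tree: every node has a proper extension in the tree. -/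
def Pruned (T : Set (List Bool)) : Prop := ∀ σ ∈ T, ∃ τ ∈ T, σ <+: τ ∧ σ ≠ τ

/-- The set `[T]` of paths of a tree `T`. -/
def paths (T : Set (List Bool)) : Set (ℕ → Bool) := {x | ∀ n, pre x n ∈ T}

/-- The fair-coin (uniform) product measure on Cantor space, characterized by its
values `μ [σ] = 2^{-|σ|}` on cylinders (this determines `μ` uniquely). -/
def IsFairCoin (μ : MeasureTheory.Measure (ℕ → Bool)) : Prop :=
  ∀ σ : List Bool, μ (cyl σ) = 2⁻¹ ^ σ.length

/-- A closed set `Q ⊆ 2^ω` has the `l`-branching property: for every `i`, every string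
of length `l i` whose cylinder meets `Q` has at least two extensions of length
`l (i+1)` whose cylinders meet `Q`. -/
def LBranchingProp (l : ℕ → ℕ) (Q : Set (ℕ → Bool)) : Prop :=
  ∀ i : ℕ, ∀ σ : List Bool, σ.length = l i → (cyl σ ∩ Q).Nonempty →
    ∃ τ₁ τ₂ : List Bool, σ <+: τ₁ ∧ σ <+: τ₂ ∧ τ₁.length = l (i + 1) ∧
      τ₂.length = l (i + 1) ∧ τ₁ ≠ τ₂ ∧ (cyl τ₁ ∩ Q).Nonempty ∧ (cyl τ₂ ∩ Q).Nonempty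

namespace Stmt4Aux

lemma length_pre (x : ℕ → Bool) (n : ℕ) : (pre x n).length = n := by simp [pre]

lemma mem_cyl_self (x : ℕ → Bool) (n : ℕ) : x ∈ cyl (pre x n) := by
  show PrefOf (pre x n) x
  unfold PrefOf
  rw [length_pre]

lemma mem_cyl_iff {x : ℕ → Bool} {σ : List Bool} : x ∈ cyl σ ↔ pre x σ.length = σ := Iff.rfl

lemma pre_prefix (x : ℕ → Bool) {m n : ℕ} (h : m ≤ n) : pre x m <+: pre x n := by
  apply List.IsPrefix.map
  rw [List.prefix_iff_eq_take, List.take_range, List.length_range, Nat.min_eq_left h]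

lemma prefix_eq_of_length {σ τ ρ : List Bool} (h1 : σ <+: ρ) (h2 : τ <+: ρ)
    (h : σ.length = τ.length) : σ = τ := by
  rcases List.prefix_of_prefix_length_le h1 h2 h.le with h'
  exact h'.eq_of_length h

lemma cyl_mono {σ τ : List Bool} (h : σ <+: τ) : cyl τ ⊆ cyl σ := by
  intro x hx
  have hxτ : pre x τ.length = τ := hx
  have hlen : σ.length ≤ τ.length := h.length_le
  have h1 : pre x σ.length <+: τ := hxτ ▸ pre_prefix x hlen
  exact prefix_eq_of_length h1 h (length_pre x σ.length)

lemma eq_of_mem_cyl {x : ℕ → Bool} {τ₁ τ₂ : List Bool} (h1 : x ∈ cyl τ₁) (h2 : x ∈ cyl τ₂)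
    (h : τ₁.length = τ₂.length) : τ₁ = τ₂ := by
  have e1 : pre x τ₁.length = τ₁ := h1
  have e2 : pre x τ₂.length = τ₂ := h2
  rw [← e1, ← e2, h]

lemma cyl_eq_iInter (σ : List Bool) :
    cyl σ = ⋂ k : Fin σ.length, {x : ℕ → Bool | x k = σ[(k : ℕ)]} := by
  ext x
  simp only [Set.mem_iInter, Set.mem_setOf_eq, mem_cyl_iff]
  constructor
  · intro h k
    have h2 : (k : ℕ) < (pre x σ.length).length := by rw [length_pre]; exact k.2
    have e : σ[(k : ℕ)] = (pre x σ.length)[(k : ℕ)]'h2 := by simp only [h]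
    rw [e]; simp [pre]
  · intro h
    apply List.ext_getElem (length_pre x σ.length)
    intro k h1 h2
    simpa [pre] using h ⟨k, h2⟩

lemma isOpen_cyl (σ : List Bool) : IsOpen (cyl σ) := by
  rw [cyl_eq_iInter]
  apply isOpen_iInter_of_finite
  intro k
  have : {x : ℕ → Bool | x k = σ[(k:ℕ)]} = (fun x : ℕ → Bool => x (k:ℕ)) ⁻¹' {σ[(k:ℕ)]} := rfl
  rw [this]
  exact (continuous_apply (k:ℕ)).isOpen_preimage _ (isOpen_discrete _)

lemma isClosed_cyl (σ : List Bool) : IsClosed (cyl σ) := by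
  rw [cyl_eq_iInter]
  apply isClosed_iInter
  intro k
  have : {x : ℕ → Bool | x k = σ[(k:ℕ)]} = (fun x : ℕ → Bool => x (k:ℕ)) ⁻¹' {σ[(k:ℕ)]} := rfl
  rw [this]
  exact IsClosed.preimage (continuous_apply (k:ℕ)) (isClosed_discrete _)

lemma finite_len (n : ℕ) : {σ : List Bool | σ.length = n}.Finite := by
  apply Set.Finite.subset (Set.finite_range (fun f : Fin n → Bool => List.ofFn f))
  rintro σ (rfl : σ.length = n)
  exact ⟨fun i => σ[i], List.ofFn_getElem (xs := σ)⟩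

lemma exists_ofFn {σ : List Bool} {n : ℕ} (h : σ.length = n) :
    ∃ f : Fin n → Bool, σ = List.ofFn f := by
  subst h
  exact ⟨fun i => σ[i], (List.ofFn_getElem (xs := σ)).symm⟩


/-- `σ` (of level `i`) has two extensions of length `l (i+1)` meeting `S`. -/
def Branches (l : ℕ → ℕ) (S : Set (ℕ → Bool)) (i : ℕ) (σ : List Bool) : Prop :=
  ∃ τ₁ τ₂ : List Bool, σ <+: τ₁ ∧ σ <+: τ₂ ∧ τ₁.length = l (i + 1) ∧
    τ₂.length = l (i + 1) ∧ τ₁ ≠ τ₂ ∧ (cyl τ₁ ∩ S).Nonempty ∧ (cyl τ₂ ∩ S).Nonempty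

def Bad (l : ℕ → ℕ) (S : Set (ℕ → Bool)) (σ : List Bool) : Prop :=
  ∃ i, σ.length = l i ∧ ¬ Branches l S i σ

def stage (l : ℕ → ℕ) (P : Set (ℕ → Bool)) : ℕ → Set (ℕ → Bool)
  | 0 => P
  | n + 1 => stage l P n \ ⋃ σ ∈ {σ | Bad l (stage l P n) σ}, cyl σ

lemma stage_antitone (l : ℕ → ℕ) (P : Set (ℕ → Bool)) : Antitone (stage l P) := by
  apply antitone_nat_of_succ_le
  intro n
  exact Set.diff_subset

lemma isClosed_stage (l : ℕ → ℕ) {P : Set (ℕ → Bool)} (hP : IsClosed P) (n : ℕ) :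
    IsClosed (stage l P n) := by
  induction n with
  | zero => exact hP
  | succ n ih =>
    exact ih.sdiff (isOpen_biUnion fun σ _ => isOpen_cyl σ)

lemma measure_bad_le {μ : MeasureTheory.Measure (ℕ → Bool)} (hμ : IsFairCoin μ)
    {l : ℕ → ℕ} {S : Set (ℕ → Bool)} {i : ℕ} {σ : List Bool}
    (hle : l i ≤ l (i + 1)) (hlen : σ.length = l i) (hb : ¬ Branches l S i σ) :
    μ (cyl σ ∩ S) ≤ 2⁻¹ ^ (l (i + 1)) := by
  by_cases h : ∃ τ : List Bool, σ <+: τ ∧ τ.length = l (i + 1) ∧ (cyl τ ∩ S).Nonempty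
  · obtain ⟨τ, hpre, hlt, hne⟩ := h
    have hsub : cyl σ ∩ S ⊆ cyl τ := by
      rintro x ⟨hx1, hx2⟩
      set τ' := pre x (l (i + 1)) with hτ'
      have hx1' : pre x σ.length = σ := hx1
      have h1 : σ <+: τ' := by
        rw [← hx1']
        exact hlen ▸ pre_prefix x hle
      have h2 : τ'.length = l (i + 1) := length_pre x _
      have h3 : x ∈ cyl τ' := mem_cyl_self x _
      have hne' : (cyl τ' ∩ S).Nonempty := ⟨x, h3, hx2⟩
      have : τ' = τ := by
        by_contra hcon
        exact hb ⟨τ', τ, h1, hpre, h2, hlt, hcon, hne', hne⟩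
      rw [← this]; exact h3
    calc μ (cyl σ ∩ S) ≤ μ (cyl τ) := MeasureTheory.measure_mono hsub
      _ = 2⁻¹ ^ (l (i + 1)) := by rw [hμ τ, hlt]
  · have : cyl σ ∩ S = ∅ := by
      rw [Set.eq_empty_iff_forall_notMem]
      rintro x ⟨hx1, hx2⟩
      have hx1' : pre x σ.length = σ := hx1
      refine h ⟨pre x (l (i + 1)), ?_, length_pre x _, ⟨x, mem_cyl_self x _, hx2⟩⟩
      rw [← hx1']
      exact hlen ▸ pre_prefix x hle
    rw [this]
    simp


end Stmt4Aux

open Stmt4Aux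

/-- If `P` is closed and `∑_i 2^{l(i) - l(i+1)} < μ(P)` for a strictly
increasing `l`, then there is a nonempty closed `Q ⊆ P` with the `l`-branching
property. -/
theorem stmt_4 (μ : MeasureTheory.Measure (ℕ → Bool)) (hμ : IsFairCoin μ)
    (P : Set (ℕ → Bool)) (hP : IsClosed P) (l : ℕ → ℕ) (hl : StrictMono l)
    (hsum : ∑' i : ℕ, (2 : ℝ≥0∞)⁻¹ ^ (l (i + 1) - l i) < μ P) :
    ∃ Q : Set (ℕ → Bool), Q.Nonempty ∧ IsClosed Q ∧ Q ⊆ P ∧ LBranchingProp l Q := by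
  classical
  set S : ℕ → Set (ℕ → Bool) := stage l P with hS
  have hanti : Antitone S := stage_antitone l P
  have hS0 : S 0 = P := rfl
  have hSsucc : ∀ n, S (n + 1) = S n \ ⋃ σ ∈ {σ | Bad l (S n) σ}, cyl σ := fun n => rfl
  have hcl : ∀ n, IsClosed (S n) := isClosed_stage l hP
  set Q : Set (ℕ → Bool) := ⋂ n, S n with hQdef
  have hQcl : IsClosed Q := isClosed_iInter hcl
  have hQP : Q ⊆ P := hS0 ▸ Set.iInter_subset S 0
  have hll : ∀ i, l i ≤ l (i + 1) := fun i => (hl (Nat.lt_succ_self i)).le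
  -- the removed set, by levels
  set rem : List Bool → Set (ℕ → Bool) :=
    fun σ => ⋃ n ∈ {n | Bad l (S n) σ}, (cyl σ ∩ S n) with hrem
  set Bi : ℕ → Set (ℕ → Bool) :=
    fun i => ⋃ f : Fin (l i) → Bool, rem (List.ofFn f) with hBi
  -- covering
  have hcover : P \ Q ⊆ ⋃ i, Bi i := by
    rintro x ⟨hxP, hxQ⟩
    have hex : ∃ n, x ∉ S n := by
      by_contra hc
      push_neg at hc
      exact hxQ (Set.mem_iInter.mpr hc)
    set n₀ := Nat.find hex with hn₀
    have hxn₀ : x ∉ S n₀ := Nat.find_spec hex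
    cases hn : n₀ with
    | zero => exact absurd hxP (by rwa [hn, hS0] at hxn₀)
    | succ m =>
      have hxm : x ∈ S m := by
        by_contra hc
        have hle' : Nat.find hex ≤ m := Nat.find_le hc
        omega
      rw [hn] at hxn₀
      rw [hSsucc m] at hxn₀
      have hxU : x ∈ ⋃ σ ∈ {σ | Bad l (S m) σ}, cyl σ := by
        by_contra hc
        exact hxn₀ ⟨hxm, hc⟩
      simp only [Set.mem_iUnion, Set.mem_setOf_eq] at hxU
      obtain ⟨σ, hbad, hxσ⟩ := hxU
      obtain ⟨i, hlen, hnb⟩ := hbad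
      obtain ⟨f, hf⟩ := exists_ofFn hlen
      refine Set.mem_iUnion.mpr ⟨i, Set.mem_iUnion.mpr ⟨f, ?_⟩⟩
      rw [← hf]
      simp only [hrem, Set.mem_iUnion, Set.mem_setOf_eq]
      exact ⟨m, ⟨i, hlen, hnb⟩, hxσ, hxm⟩
  -- measure of rem
  have hrem_le : ∀ i, ∀ σ : List Bool, σ.length = l i → μ (rem σ) ≤ 2⁻¹ ^ (l (i + 1)) := by
    intro i σ hlen
    by_cases h : ∃ n, Bad l (S n) σ
    · set n₀ := Nat.find h with hn₀
      have hbad : Bad l (S n₀) σ := Nat.find_spec h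
      have hsub : rem σ ⊆ cyl σ ∩ S n₀ := by
        simp only [hrem, Set.iUnion_subset_iff, Set.mem_setOf_eq]
        intro n hn
        exact Set.inter_subset_inter_right _ (hanti (Nat.find_min' h hn))
      obtain ⟨i', hlen', hnb⟩ := hbad
      have : i' = i := hl.injective (by omega)
      subst this
      exact (MeasureTheory.measure_mono hsub).trans (measure_bad_le hμ (hll i') hlen hnb)
    · have : rem σ = ∅ := by
        simp only [hrem]
        push_neg at h
        simp [h]
      rw [this]; simp
  -- measure of Bi
  have hBi_le : ∀ i, μ (Bi i) ≤ 2⁻¹ ^ (l (i + 1) - l i) := by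
    intro i
    have h1 : μ (Bi i) ≤ ∑' f : Fin (l i) → Bool, μ (rem (List.ofFn f)) :=
      MeasureTheory.measure_iUnion_le _
    have h2 : ∑' f : Fin (l i) → Bool, μ (rem (List.ofFn f)) ≤
        ∑' _f : Fin (l i) → Bool, (2 : ℝ≥0∞)⁻¹ ^ (l (i + 1)) :=
      ENNReal.tsum_le_tsum fun f => hrem_le i _ (by simp)
    have h3 : ∑' _f : Fin (l i) → Bool, (2 : ℝ≥0∞)⁻¹ ^ (l (i + 1)) =
        (2 : ℝ≥0∞) ^ (l i) * 2⁻¹ ^ (l (i + 1)) := by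
      rw [tsum_fintype]
      rw [Finset.sum_const, Finset.card_univ]
      have hc : Fintype.card (Fin (l i) → Bool) = 2 ^ (l i) := by
        simp [Fintype.card_fun]
      rw [hc, nsmul_eq_mul]
      push_cast
      ring
    have h4 : (2 : ℝ≥0∞) ^ (l i) * 2⁻¹ ^ (l (i + 1)) = 2⁻¹ ^ (l (i + 1) - l i) := by
      obtain ⟨d, hd⟩ := Nat.exists_eq_add_of_le (hll i)
      have hd' : l (i + 1) - l i = d := by omega
      rw [hd', hd, pow_add, ← mul_assoc, ← mul_pow]
      rw [ENNReal.mul_inv_cancel (by norm_num) (by norm_num)]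
      simp
    calc μ (Bi i) ≤ _ := h1
      _ ≤ _ := h2
      _ = _ := by rw [h3, h4]
  have hPQ : μ (P \ Q) ≤ ∑' i : ℕ, (2 : ℝ≥0∞)⁻¹ ^ (l (i + 1) - l i) :=
    (MeasureTheory.measure_mono hcover).trans
      ((MeasureTheory.measure_iUnion_le _).trans (ENNReal.tsum_le_tsum hBi_le))
  -- Q nonempty
  have hQne : Q.Nonempty := by
    by_contra hc
    rw [Set.not_nonempty_iff_eq_empty] at hc
    rw [hc, Set.diff_empty] at hPQ
    exact absurd (hPQ.trans_lt hsum) (lt_irrefl _)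
  -- branching
  refine ⟨Q, hQne, hQcl, hQP, ?_⟩
  intro i σ hlen ⟨x, hxσ, hxQ⟩
  have hnb : ∀ n, Branches l (S n) i σ := by
    intro n
    by_contra hnb
    have hx1 : x ∈ S (n + 1) := Set.mem_iInter.mp hxQ (n + 1)
    rw [hSsucc n] at hx1
    exact hx1.2 (Set.mem_biUnion (show σ ∈ {σ | Bad l (S n) σ} from ⟨i, hlen, hnb⟩) hxσ)
  set N : List Bool × List Bool → Set ℕ := fun p =>
    {n | σ <+: p.1 ∧ σ <+: p.2 ∧ p.1 ≠ p.2 ∧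
      (cyl p.1 ∩ S n).Nonempty ∧ (cyl p.2 ∩ S n).Nonempty} with hN
  set G : Set (List Bool × List Bool) :=
    {τ | τ.length = l (i + 1)} ×ˢ {τ | τ.length = l (i + 1)} with hG
  have hGfin : G.Finite := (finite_len _).prod (finite_len _)
  have hcov : (Set.univ : Set ℕ) ⊆ ⋃ p ∈ G, N p := by
    intro n _
    obtain ⟨τ₁, τ₂, h1, h2, h3, h4, h5, h6, h7⟩ := hnb n
    exact Set.mem_biUnion (show (τ₁, τ₂) ∈ G from ⟨h3, h4⟩) ⟨h1, h2, h5, h6, h7⟩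
  have hex : ∃ p ∈ G, (N p).Infinite := by
    by_contra hc
    push_neg at hc
    exact Set.infinite_univ ((hGfin.biUnion hc).subset hcov)
  obtain ⟨⟨τ₁, τ₂⟩, hpG, hinf⟩ := hex
  obtain ⟨n₁, hn₁⟩ := hinf.nonempty
  obtain ⟨hpre1, hpre2, hne, -, -⟩ := hn₁
  have hmeet : ∀ τ ∈ ({τ₁, τ₂} : Set (List Bool)),
      ∀ m, (cyl τ ∩ S m).Nonempty := by
    intro τ hτ m
    obtain ⟨n, hn, hmn⟩ := hinf.exists_gt m
    have hsub : cyl τ ∩ S n ⊆ cyl τ ∩ S m :=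
      Set.inter_subset_inter_right _ (hanti hmn.le)
    rcases hτ with rfl | rfl
    · exact hn.2.2.2.1.mono hsub
    · exact hn.2.2.2.2.mono hsub
  have key : ∀ τ : List Bool, (∀ m, (cyl τ ∩ S m).Nonempty) → (cyl τ ∩ Q).Nonempty := by
    intro τ hm
    have hmono : Antitone (fun m => cyl τ ∩ S m) :=
      fun m₁ m₂ h => Set.inter_subset_inter_right _ (hanti h)
    have hdir : Directed (· ⊇ ·) (fun m => cyl τ ∩ S m) := hmono.directed_ge
    have hne' : (⋂ m, (cyl τ ∩ S m)).Nonempty :=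
      IsCompact.nonempty_iInter_of_directed_nonempty_isCompact_isClosed _ hdir hm
        (fun m => ((isClosed_cyl τ).inter (hcl m)).isCompact)
        (fun m => (isClosed_cyl τ).inter (hcl m))
    rwa [← Set.inter_iInter] at hne'
  exact ⟨τ₁, τ₂, hpre1, hpre2, hpG.1, hpG.2, hne,
    key τ₁ (hmeet τ₁ (by simp)), key τ₂ (hmeet τ₂ (by simp))⟩
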